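/- Let g = L_{5,3} (nonzero brackets [e1,e2]=e3, [e1,e3]=e4) and let g_R = g ⊕ ℝ with bracket [(ξ,r),(η,k)] = ([ξ,η],0), with 1* ∈ g_R* the projection onto the ℝ-summand and e^1,…,e^5 the dual basis of g* (extended by zero on the ℝ-summand). Then the 2-form ω := e^1 ∧ e^3 − 1* ∧ e^4 ∈ Λ^2 g_R* satisfies Dω = 0, where D = δ + 1*∧ and δ is the Chevalley–Eilenberg differential of g_R. -/

import Mathlib

set_option linter.unnecessarySeqFocus false

noncomputable section

/-- The wedge product of two scalar-valued alternating forms. -/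
def wedge {R M : Type*} [CommRing R] [AddCommGroup M] [Module R M] {m n : ℕ}
    (α : M [⋀^Fin m]→ₗ[R] R) (β : M [⋀^Fin n]→ₗ[R] R) : M [⋀^Fin (m + n)]→ₗ[R] R :=
  (LinearMap.mul' R R).compAlternatingMap ((α.domCoprod β).domDomCongr finSumFinEquiv)

/-- Reindexing of an alternating form along an equality of degrees. -/
def castForm {R M : Type*} [CommRing R] [AddCommGroup M] [Module R M] {m n : ℕ}
    (h : m = n) (α : M [⋀^Fin m]→ₗ[R] R) : M [⋀^Fin n]→ₗ[R] R :=
  α.domDomCongr (finCongr h)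

/-- A linear functional, viewed as a `1`-form. -/
def oneForm {R M : Type*} [CommRing R] [AddCommGroup M] [Module R M]
    (f : M →ₗ[R] R) : M [⋀^Fin 1]→ₗ[R] R :=
  AlternatingMap.ofSubsingleton R M R 0 f


/-- The argument tuple `([x_i,x_j], x_0, …, x̂_i, …, x̂_j, …, x_m)` appearing in the Koszul
formula for the Chevalley–Eilenberg differential (only relevant when `i < j`). -/
def kosArg {W : Type*} [LieRing W] {m : ℕ} (v : Fin (m + 1) → W) (i j : Fin (m + 1)) :
    Fin m → W := fun k =>
  if hk : (k : ℕ) = 0 then ⁅v i, v j⁆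
  else
    v ⟨if (k : ℕ) - 1 < (i : ℕ) then (k : ℕ) - 1
       else if (k : ℕ) < (j : ℕ) then (k : ℕ) else (k : ℕ) + 1,
      by have := k.isLt; have := i.isLt; have := j.isLt; split_ifs <;> omega⟩

/-- `d` is (the degree `m` part of) the Chevalley–Eilenberg differential of `W` with trivial
coefficients, characterized by the Koszul formula
`(δα)(x_0,…,x_m) = Σ_{i<j} (−1)^{i+j} α([x_i,x_j],x_0,…,x̂_i,…,x̂_j,…,x_m)`. -/
def IsCEDiff {R W : Type*} [CommRing R] [LieRing W] [LieAlgebra R W]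
    {m : ℕ} (d : (W [⋀^Fin m]→ₗ[R] R) → (W [⋀^Fin (m + 1)]→ₗ[R] R)) : Prop :=
  ∀ (α : W [⋀^Fin m]→ₗ[R] R) (v : Fin (m + 1) → W),
    d α v = ∑ p ∈ Finset.univ.filter (fun p : Fin (m + 1) × Fin (m + 1) => p.1 < p.2),
      ((-1 : R) ^ ((p.1 : ℕ) + (p.2 : ℕ))) • α (kosArg v p.1 p.2)


section TrivialExtension

variable {R : Type*} [CommRing R] {L : Type*} [LieRing L]

/-- The Lie bracket `[(ξ,r),(η,k)] = ([ξ,η],0)` on the abelian extension `L ⊕ R`. -/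
instance instLieRingTrivExt : LieRing (L × R) where
  bracket x y := (⁅x.1, y.1⁆, 0)
  add_lie x y z := by ext <;> simp [add_lie]
  lie_add x y z := by ext <;> simp [lie_add]
  lie_self x := by ext <;> simp
  leibniz_lie x y z := by ext <;> simp

instance instLieAlgebraTrivExt [LieAlgebra R L] : LieAlgebra R (L × R) where
  lie_smul t x y := by
    show ((⁅x.1, (t • y).1⁆ : L), (0 : R)) = t • (⁅x.1, y.1⁆, (0 : R))
    ext <;> simp

end TrivialExtension


/-- The underlying vector space of the 5-dimensional nilpotent Lie algebra `L53`. -/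
def L53 : Type := Fin 5 → ℝ

instance : AddCommGroup L53 := inferInstanceAs (AddCommGroup (Fin 5 → ℝ))
instance : Module ℝ L53 := inferInstanceAs (Module ℝ (Fin 5 → ℝ))

theorem L53.add_apply (x y : L53) (i : Fin 5) : (x + y) i = x i + y i := rfl
theorem L53.smul_apply (t : ℝ) (x : L53) (i : Fin 5) : (t • x) i = t * x i := rfl

/-- The bracket of `L53`: `[e1,e2] = e3`, `[e1,e3] = e4`. -/
def L53.b (x y : Fin 5 → ℝ) : Fin 5 → ℝ := ![0, 0, x 0 * y 1 - x 1 * y 0, x 0 * y 2 - x 2 * y 0, 0]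

instance : LieRing L53 where
  bracket x y := L53.b x y
  add_lie x y z := by
    show L53.b (x + y) z = L53.b x z + L53.b y z
    funext i; fin_cases i <;> simp [L53.b, L53.add_apply] <;> ring
  lie_add x y z := by
    show L53.b x (y + z) = L53.b x y + L53.b x z
    funext i; fin_cases i <;> simp [L53.b, L53.add_apply] <;> ring
  lie_self x := by
    show L53.b x x = 0
    funext i; fin_cases i <;> simp [L53.b] <;> ring
  leibniz_lie x y z := by
    show L53.b x (L53.b y z) = L53.b (L53.b x y) z + L53.b y (L53.b x z)
    funext i; fin_cases i <;> simp [L53.b, L53.add_apply] <;> ring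

instance : LieAlgebra ℝ L53 where
  lie_smul t x y := by
    show L53.b x (t • y) = t • L53.b x y
    funext i; fin_cases i <;> simp [L53.b, L53.smul_apply] <;> ring

/-- The standard basis `e1, …, e5` of `L53` (indexed by `0, …, 4`). -/
def L53.e (i : Fin 5) : L53 := (Pi.single i 1 : Fin 5 → ℝ)

/-- The dual basis `e^1, …, e^5` of `L53` (indexed by `0, …, 4`). -/
def L53.eps (i : Fin 5) : Module.Dual ℝ L53 where
  toFun x := x i
  map_add' _ _ := rfl
  map_smul' _ _ := rfl


/-- `1* ∈ g_ℝ*`, the projection onto the `ℝ`-summand of `g_ℝ = L53 ⊕ ℝ`. -/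
def oneStar : Module.Dual ℝ (L53 × ℝ) := LinearMap.snd ℝ L53 ℝ

/-- `e^1, …, e^5`, extended by zero on the `ℝ`-summand of `g_ℝ = L53 ⊕ ℝ`. -/
def epsR (i : Fin 5) : Module.Dual ℝ (L53 × ℝ) :=
  (L53.eps i).comp (LinearMap.fst ℝ L53 ℝ)

/-- The 2-form `ω = e^1 ∧ e^3 − 1* ∧ e^4` on `g_ℝ = L53 ⊕ ℝ`. -/
def ω : (L53 × ℝ) [⋀^Fin 2]→ₗ[ℝ] ℝ := wedge (oneForm (epsR 0)) (oneForm (epsR 2)) - wedge (oneForm oneStar) (oneForm (epsR 3))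

section Helpers
open Equiv

variable {M : Type*} [AddCommGroup M] [Module ℝ M]

theorem wedge11 (f g : M →ₗ[ℝ] ℝ) (v : Fin 2 → M) :
    wedge (oneForm f) (oneForm g) v = f (v 0) * g (v 1) - f (v 1) * g (v 0) := by
  have key := MultilinearMap.domCoprod_alternization_eq (oneForm f) (oneForm g)
  have h1 : ((Fintype.card (Fin 1)).factorial * (Fintype.card (Fin 1)).factorial) = 1 := by simp
  rw [h1, one_smul] at key
  have hv : wedge (oneForm f) (oneForm g) v
      = LinearMap.mul' ℝ ℝ (((oneForm f).domCoprod (oneForm g)) (v ∘ finSumFinEquiv)) := by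
    simp [wedge]
  rw [hv, ← key, MultilinearMap.alternatization_apply]
  rw [← (Equiv.permCongr (finSumFinEquiv (m := 1) (n := 1))).symm.sum_comp]
  rw [show (Finset.univ : Finset (Perm (Fin 2))) = {1, Equiv.swap 0 1} by decide]
  rw [Finset.sum_insert (by decide), Finset.sum_singleton]
  simp only [MultilinearMap.domDomCongr_apply, MultilinearMap.domCoprod_apply, map_smul,
    LinearMap.map_smul_of_tower, LinearMap.mul'_apply, Equiv.permCongr_symm,
    Equiv.Perm.sign_permCongr, Equiv.permCongr_apply, Equiv.symm_symm, Equiv.apply_symm_apply,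
    Function.comp_apply, map_add]
  simp [oneForm, Equiv.Perm.sign_swap, finSumFinEquiv_apply_left, finSumFinEquiv_apply_right,
    Fin.castAdd, Fin.natAdd, Equiv.swap_apply_def]
  have h0 : finSumFinEquiv (Sum.inl (0:Fin 1)) = (0 : Fin (1+1)) := by decide
  have h1' : finSumFinEquiv (Sum.inr (0:Fin 1)) = (1 : Fin (1+1)) := by decide
  rw [h0, h1']
  norm_num
  ring

theorem two_form_eta (β : M [⋀^Fin 2]→ₗ[ℝ] ℝ) (m : Fin 2 → M) : β m = β ![m 0, m 1] := by
  congr 1; funext i; fin_cases i <;> rfl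

theorem two_form_swap (β : M [⋀^Fin 2]→ₗ[ℝ] ℝ) (x y : M) : β ![x, y] = -β ![y, x] := by
  have h := β.map_swap ![y, x] (show (0:Fin 2) ≠ 1 by decide)
  rw [show (![y,x] ∘ Equiv.swap (0:Fin 2) 1) = ![x,y] by funext i; fin_cases i <;> simp] at h
  rw [h]

theorem wedge12 (f : M →ₗ[ℝ] ℝ) (β : M [⋀^Fin 2]→ₗ[ℝ] ℝ) (v : Fin 3 → M) :
    wedge (oneForm f) β v =
      f (v 0) * β ![v 1, v 2] - f (v 1) * β ![v 0, v 2] + f (v 2) * β ![v 0, v 1] := by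
  have key := MultilinearMap.domCoprod_alternization_eq (oneForm f) β
  have h1 : ((Fintype.card (Fin 1)).factorial * (Fintype.card (Fin 2)).factorial) = 2 := by simp
  rw [h1] at key
  have hv : wedge (oneForm f) β v
      = LinearMap.mul' ℝ ℝ (((oneForm f).domCoprod β) (v ∘ (finSumFinEquiv (m:=1) (n:=2)))) := by
    simp [wedge]
  have h2 : (2:ℝ) * wedge (oneForm f) β v
      = LinearMap.mul' ℝ ℝ ((MultilinearMap.alternatization
          ((oneForm f : MultilinearMap ℝ (fun _ : Fin 1 => M) ℝ).domCoprod β))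
          (v ∘ (finSumFinEquiv (m:=1) (n:=2)))) := by
    rw [key, hv]
    simp only [AlternatingMap.smul_apply]
    rw [map_nsmul]
    push_cast [nsmul_eq_mul]
    ring
  rw [MultilinearMap.alternatization_apply] at h2
  rw [← (Equiv.permCongr (finSumFinEquiv (m := 1) (n := 2))).symm.sum_comp] at h2
  rw [show (Finset.univ : Finset (Perm (Fin 3))) =
      {1, Equiv.swap 0 1, Equiv.swap 0 2, Equiv.swap 1 2,
       Equiv.swap 0 1 * Equiv.swap 1 2, Equiv.swap 1 2 * Equiv.swap 0 1} by decide] at h2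
  rw [Finset.sum_insert (by decide), Finset.sum_insert (by decide), Finset.sum_insert (by decide),
    Finset.sum_insert (by decide), Finset.sum_insert (by decide), Finset.sum_singleton] at h2
  simp only [MultilinearMap.domDomCongr_apply, MultilinearMap.domCoprod_apply,
    LinearMap.map_smul_of_tower, map_add, LinearMap.mul'_apply, Equiv.permCongr_symm,
    Equiv.Perm.sign_permCongr, Equiv.permCongr_apply, Equiv.symm_symm, Equiv.apply_symm_apply,
    Function.comp_apply] at h2
  have hβ : ∀ σ : Equiv.Perm (Fin 3),
      ((β : MultilinearMap ℝ (fun _ : Fin 2 => M) ℝ) fun i => v (σ (finSumFinEquiv (m:=1) (n:=2) (Sum.inr i))))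
        = β ![v (σ 1), v (σ 2)] := by
    intro σ
    show β _ = _
    congr 1; funext i; fin_cases i <;> rfl
  have hf : ∀ σ : Equiv.Perm (Fin 3),
      ((oneForm f : MultilinearMap ℝ (fun _ : Fin 1 => M) ℝ) fun i => v (σ (finSumFinEquiv (m:=1) (n:=2) (Sum.inl i))))
        = f (v (σ 0)) := by
    intro σ
    show oneForm f _ = _
    rfl
  simp only [hβ, hf] at h2
  norm_num [Equiv.swap_apply_def, Equiv.Perm.sign_swap, Equiv.Perm.mul_apply, Fin.ext_iff] at h2
  rw [two_form_swap β (v 1) (v 0), two_form_swap β (v 2) (v 1), two_form_swap β (v 2) (v 0)] at h2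
  linarith

end Helpers

/-- Let `g = L_{5,3}` (nonzero brackets `[e1,e2]=e3`, `[e1,e3]=e4`) and
let `g_ℝ = g ⊕ ℝ` with bracket `[(ξ,r),(η,k)] = ([ξ,η],0)`, with `1* ∈ g_ℝ*` the
projection onto the `ℝ`-summand and `e^1,…,e^5` the dual basis of `g*` (extended by zero
on the `ℝ`-summand). Then the 2-form `ω := e^1 ∧ e^3 − 1* ∧ e^4 ∈ Λ² g_ℝ*` satisfies
`Dω = 0`, where `D = δ + 1*∧` and `δ` is the Chevalley–Eilenberg differential of `g_ℝ`
(given by the Koszul formula, i.e. any `δ` with `IsCEDiff δ`). -/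
theorem Domega_eq_zero_L53
    (δ : ((L53 × ℝ) [⋀^Fin 2]→ₗ[ℝ] ℝ) → ((L53 × ℝ) [⋀^Fin 3]→ₗ[ℝ] ℝ))
    (hδ : IsCEDiff δ) :
    δ ω + wedge (oneForm oneStar) ω = 0 := by
  ext v
  rw [AlternatingMap.add_apply, hδ ω v]
  rw [show (Finset.univ.filter (fun p : Fin 3 × Fin 3 => p.1 < p.2)) =
      {((0:Fin 3),(1:Fin 3)), (0,2), (1,2)} by decide]
  rw [Finset.sum_insert (by decide), Finset.sum_insert (by decide), Finset.sum_singleton]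
  have hk01 : kosArg v 0 1 = ![⁅v 0, v 1⁆, v 2] := by
    funext k; fin_cases k <;> rfl
  have hk02 : kosArg v 0 2 = ![⁅v 0, v 2⁆, v 1] := by
    funext k; fin_cases k <;> rfl
  have hk12 : kosArg v 1 2 = ![⁅v 1, v 2⁆, v 0] := by
    funext k; fin_cases k <;> rfl
  have hω : ∀ w : Fin 2 → (L53 × ℝ), ω w =
      (epsR 0 (w 0) * epsR 2 (w 1) - epsR 0 (w 1) * epsR 2 (w 0))
      - (oneStar (w 0) * epsR 3 (w 1) - oneStar (w 1) * epsR 3 (w 0)) := by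
    intro w
    rw [show ω = wedge (oneForm (epsR 0)) (oneForm (epsR 2))
        - wedge (oneForm oneStar) (oneForm (epsR 3)) from rfl,
      AlternatingMap.sub_apply, wedge11, wedge11]
  rw [hk01, hk02, hk12, wedge12]
  simp only [hω]
  have hbr : ∀ x y : L53 × ℝ, ⁅x, y⁆ = (L53.b x.1 y.1, 0) := fun _ _ => rfl
  simp only [hbr]
  have he : ∀ (i : Fin 5) (x : L53 × ℝ), epsR i x = x.1 i := fun _ _ => rfl
  have ho : ∀ x : L53 × ℝ, oneStar x = x.2 := fun _ => rfl
  simp only [he, ho, AlternatingMap.zero_apply, Matrix.cons_val_zero, Matrix.cons_val_one,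
    Matrix.head_cons, L53.b, Matrix.cons_val_fin_one]
  simp [Matrix.vecHead, Matrix.vecTail]
  ring

end
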